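/- Let (W,S) be a Coxeter system with a realization V over a commutative domain 𝕜 ⊆ ℝ, and suppose W preserves the almost-orthant for k spanned by (X,H). If s, t ∈ S satisfy X_s ∩ X_t = ∅, then the actions of s and t on V commute: the linear maps by which s and t act on V satisfy s∘t = t∘s. -/

import Mathlib

open Function

noncomputable section

/-- The subring `ℤ ⊆ ℝ` of integers, used to specialize the base subring `k` to `ℤ`. -/
def intSubring : Subring ℝ := (Int.castRingHom ℝ).range

/-- A *realization* of a Coxeter system `cs : CoxeterSystem M W` over a commutative domain
`𝕜 ⊆ ℝ` (encoded as a subring of `ℝ`): a `𝕜`-module `V` together with simple roots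
`root b ∈ V` and simple coroots `coroot b ∈ V*`, and a linear action `ρ` of `W` on `V`
for which each simple reflection acts by the reflection formula
`s(v) = v - ⟨coroot s, v⟩ • root s`. -/
structure Realization (𝕜 : Subring ℝ) {B W : Type*} [Group W]
    (M : CoxeterMatrix B) (cs : CoxeterSystem M W)
    (V : Type*) [AddCommGroup V] [Module 𝕜 V] where
  root : B → V
  coroot : B → (V →ₗ[𝕜] 𝕜)
  ρ : W →* (V ≃ₗ[𝕜] V)
  coroot_root_self : ∀ b, coroot b (root b) = 2
  coroot_root_eq_zero_iff : ∀ b b', b ≠ b' → (coroot b (root b') = 0 ↔ M.M b b' = 2)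
  simple_act : ∀ (b : B) (v : V), ρ (cs.simple b) v = v - coroot b v • root b

variable {𝕜 : Subring ℝ}

/-- `c ∈ k₊ := k ∩ ℝ_{≥0}`, for an element `c` of the base domain `𝕜 ⊆ ℝ`. -/
def InKPlus (k : Subring ℝ) (c : 𝕜) : Prop := (c : ℝ) ∈ k ∧ 0 ≤ (c : ℝ)

/-- The almost-orthant spanned by `(X, H)`, where `X` is the `Sum.inl` part of the `𝕜`-basis
`e` and `H` is the `Sum.inr` part: all elements of `V` whose `X`-coordinates lie in
`k₊ = k ∩ ℝ_{≥0}` and whose `H`-coordinates lie in `k`.  (When the `Sum.inr` index type is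
empty, this is the orthant spanned by the basis.) -/
def almostOrthant {V ι η : Type*} [AddCommGroup V] [Module 𝕜 V] (k : Subring ℝ)
    (e : Module.Basis (ι ⊕ η) 𝕜 V) : Set V :=
  {v | (∀ p, (e.repr v p : ℝ) ∈ k) ∧ ∀ i : ι, 0 ≤ (e.repr v (Sum.inl i) : ℝ)}

/-- The data witnessing that the Coxeter group `W`, acting via the realization `r`, preserves
a `k`-lattice (the `k`-span of the `𝕜`-basis `e` of `V`, whose `k`-basis is
`X ∪ H = {e (Sum.inl i)} ∪ {e (Sum.inr j)}`) together with the almost-orthant spanned by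
`(X, H)` inside it; each element of `H` is required to be `W`-invariant. -/
structure OrthantSetup (𝕜 k : Subring ℝ) {B W : Type*} [Group W]
    {M : CoxeterMatrix B} {cs : CoxeterSystem M W}
    {V : Type*} [AddCommGroup V] [Module 𝕜 V]
    (r : Realization 𝕜 M cs V) (ι η : Type*) where
  hk : k ≤ 𝕜
  e : Module.Basis (ι ⊕ η) 𝕜 V
  invariant : ∀ (j : η) (w : W), r.ρ w (e (Sum.inr j)) = e (Sum.inr j)
  lattice_stable : ∀ (w : W) (v : V), (∀ p, ((e.repr v p : ℝ)) ∈ k) →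
    ∀ p, ((e.repr (r.ρ w v) p : ℝ)) ∈ k
  orthant_stable : ∀ (w : W), ∀ v ∈ almostOrthant k e, r.ρ w v ∈ almostOrthant k e

namespace OrthantSetup

variable {𝕜 k : Subring ℝ} {B W : Type*} [Group W] {M : CoxeterMatrix B}
  {cs : CoxeterSystem M W} {V : Type*} [AddCommGroup V] [Module 𝕜 V]
  {r : Realization 𝕜 M cs V} {ι η : Type*}

/-- The element `xᵢ` of `X`. -/
def X (d : OrthantSetup 𝕜 k r ι η) (i : ι) : V := d.e (Sum.inl i)

/-- The element `ħⱼ` of `H`. -/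
def hbar (d : OrthantSetup 𝕜 k r ι η) (j : η) : V := d.e (Sum.inr j)

/-- `v` lies in the `k`-span of `H`. -/
def InHSpan (d : OrthantSetup 𝕜 k r ι η) (v : V) : Prop :=
  (∀ i : ι, d.e.repr v (Sum.inl i) = 0) ∧ ∀ j : η, ((d.e.repr v (Sum.inr j) : ℝ)) ∈ k

/-- The set `Xₛ ⊆ X` (identified with a set of indices) of elements of `X` moved by the
simple reflection with index `b`. -/
def moved (d : OrthantSetup 𝕜 k r ι η) (b : B) : Set ι :=
  {i | r.ρ (cs.simple b) (d.X i) ≠ d.X i}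

/-- `g` acts on `V` as a *rescaled shifted transposition* transposing `xᵢ` and `xⱼ`:
`g xᵢ = c • xⱼ + h` and `g xⱼ = c⁻¹ • (xᵢ - h)` for some `c ∈ k₊` invertible with inverse
in `k₊` and some `h` in the `k`-span of `H`, while `g` fixes all other elements of `X`. -/
def IsRST (d : OrthantSetup 𝕜 k r ι η) (g : V ≃ₗ[𝕜] V) (i j : ι) : Prop :=
  i ≠ j ∧ ∃ (c c' : 𝕜) (h : V), InKPlus k c ∧ InKPlus k c' ∧ c * c' = 1 ∧
    d.InHSpan h ∧ g (d.X i) = c • d.X j + h ∧ g (d.X j) = c' • (d.X i - h) ∧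
    ∀ z : ι, z ≠ i → z ≠ j → g (d.X z) = d.X z

/-- The transposition graph: vertices are (the indices of) the elements of `X`, and two
distinct vertices are adjacent when some simple reflection moves both of the corresponding
elements of `X` (i.e. they form the set `Xₛ` for some `s ∈ S`). -/
def transGraph (d : OrthantSetup 𝕜 k r ι η) : SimpleGraph ι where
  Adj i j := i ≠ j ∧ ∃ b : B, i ∈ d.moved b ∧ j ∈ d.moved b
  symm := by
    constructor
    intro i j h
    exact ⟨h.1.symm, h.2.choose, h.2.choose_spec.2, h.2.choose_spec.1⟩
  loopless := by
    constructor
    intro i h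
    exact h.1 rfl

end OrthantSetup
section AuxCommute

set_option maxHeartbeats 1000000
set_option synthInstance.maxHeartbeats 1600000
set_option linter.unusedSectionVars false

private lemma aux_nzd (𝕜 : Subring ℝ) (V : Type*) [AddCommGroup V] [Module 𝕜 V]
    [Module.Free 𝕜 V] : Module.IsTorsionFree 𝕜 V := inferInstance

/-- Purely real-arithmetic core of the sign argument. -/
private lemma aux_core {P ι η : Type*} (inl : ι → P) (inr : η → P)
    (hcases : ∀ p : P, (∃ i, p = inl i) ∨ (∃ j, p = inr j))
    (R C : P → ℝ) (S : Finset P)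
    (hA : ∀ j p : ι, j ≠ p → C (inl j) * R (inl p) ≤ 0)
    (hB : ∀ j : ι, R (inl j) * C (inl j) ≤ 1)
    (hCr : ∀ j : η, C (inr j) = 0)
    (hsum : ∑ p ∈ S, R p * C p = 2)
    (ε : ℝ) (hε : ε = 1 ∨ ε = -1)
    (hsign : ∀ q : ι, ε * C (inl q) ≤ 0) : False := by
  classical
  have hε2 : ε * ε = 1 := by rcases hε with h | h <;> rw [h] <;> norm_num
  have hεne : ε ≠ 0 := by rcases hε with h | h <;> rw [h] <;> norm_num
  -- there is a strictly positive term
  have hex : ∃ p ∈ S, 0 < R p * C p := by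
    by_contra hc
    push_neg at hc
    have : ∑ p ∈ S, R p * C p ≤ 0 := Finset.sum_nonpos hc
    linarith
  obtain ⟨p, hpS, hp⟩ := hex
  obtain ⟨j, rfl⟩ | ⟨j', rfl⟩ := hcases p
  swap
  · rw [hCr j', mul_zero] at hp; linarith
  -- now p = inl j with R j * C j > 0
  have hCjne : C (inl j) ≠ 0 := by
    intro h0; rw [h0, mul_zero] at hp; linarith
  have hεCj : ε * C (inl j) < 0 :=
    lt_of_le_of_ne (hsign j) (mul_ne_zero hεne hCjne)
  have hεRj : ε * R (inl j) < 0 := by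
    by_contra hcon
    push_neg at hcon
    have h1 : ε * R (inl j) * (ε * C (inl j)) ≤ 0 :=
      mul_nonpos_of_nonneg_of_nonpos hcon hεCj.le
    have h2 : ε * R (inl j) * (ε * C (inl j)) = (ε * ε) * (R (inl j) * C (inl j)) := by ring
    rw [h2, hε2, one_mul] at h1
    linarith
  -- every other term is nonpositive
  have hterm : ∀ p ∈ S.erase (inl j), R p * C p ≤ 0 := by
    intro p hpmem
    have hpne : p ≠ inl j := Finset.ne_of_mem_erase hpmem
    obtain ⟨q, rfl⟩ | ⟨q', rfl⟩ := hcases p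
    · have hqj : j ≠ q := fun hh => hpne (by rw [hh])
      -- ε * R (inl q) ≥ 0
      have hεRq : 0 ≤ ε * R (inl q) := by
        by_contra hcon
        push_neg at hcon
        have h1 : 0 < (ε * C (inl j)) * (ε * R (inl q)) := mul_pos_of_neg_of_neg hεCj hcon
        have h2 : (ε * C (inl j)) * (ε * R (inl q)) = (ε * ε) * (C (inl j) * R (inl q)) := by
          ring
        rw [h2, hε2, one_mul] at h1
        have := hA j q hqj
        linarith
      have h1 : ε * R (inl q) * (ε * C (inl q)) ≤ 0 :=
        mul_nonpos_of_nonneg_of_nonpos hεRq (hsign q)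
      have h2 : ε * R (inl q) * (ε * C (inl q)) = (ε * ε) * (R (inl q) * C (inl q)) := by ring
      rw [h2, hε2, one_mul] at h1
      exact h1
    · rw [hCr q', mul_zero]
  have hsplit : R (inl j) * C (inl j) + ∑ p ∈ S.erase (inl j), R p * C p = 2 := by
    rw [← hsum]
    exact Finset.add_sum_erase S (fun p => R p * C p) hpS
  have hrest : ∑ p ∈ S.erase (inl j), R p * C p ≤ 0 := Finset.sum_nonpos hterm
  have := hB j
  linarith

namespace OrthantSetup

variable {𝕜 k : Subring ℝ} {B W : Type*} [Group W] {M : CoxeterMatrix B}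
  {cs : CoxeterSystem M W} {V : Type*} [AddCommGroup V] [Module 𝕜 V] [Module.Free 𝕜 V]
  {r : Realization 𝕜 M cs V} {ι η : Type*} (d : OrthantSetup 𝕜 k r ι η)

private lemma aux_root_ne_zero (b : B) : r.root b ≠ 0 := by
  intro h0
  have h := r.coroot_root_self b
  rw [h0, map_zero] at h
  exact two_ne_zero h.symm

private lemma aux_coroot_basis (b : B) (p : ι ⊕ η)
    (hp : r.ρ (cs.simple b) (d.e p) = d.e p) : r.coroot b (d.e p) = 0 := by
  haveI := aux_nzd 𝕜 V
  have h := r.simple_act b (d.e p)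
  rw [hp] at h
  have h2 : r.coroot b (d.e p) • r.root b = 0 := sub_eq_self.mp h.symm
  rcases smul_eq_zero.mp h2 with h3 | h3
  · exact h3
  · exact absurd h3 (aux_root_ne_zero b)

private lemma aux_coroot_hbar (b : B) (j : η) : r.coroot b (d.e (Sum.inr j)) = 0 :=
  aux_coroot_basis d b _ (d.invariant j _)

private lemma aux_not_moved (b : B) (i : ι) (hi : i ∉ d.moved b) :
    r.coroot b (d.e (Sum.inl i)) = 0 := by
  have : r.ρ (cs.simple b) (d.X i) = d.X i := not_not.mp hi
  exact aux_coroot_basis d b (Sum.inl i) this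

private lemma aux_coord_ne (b : B) (j : ι) (p : ι ⊕ η) (hp : Sum.inl j ≠ p) :
    d.e.repr (r.ρ (cs.simple b) (d.e (Sum.inl j))) p
      = -(r.coroot b (d.e (Sum.inl j)) * d.e.repr (r.root b) p) := by
  classical
  rw [r.simple_act]
  simp [map_sub, map_smul, Module.Basis.repr_self, Finsupp.single_apply, if_neg hp,
    Finsupp.smul_apply, smul_eq_mul, Finsupp.sub_apply]

private lemma aux_coord_eq (b : B) (j : ι) :
    d.e.repr (r.ρ (cs.simple b) (d.e (Sum.inl j))) (Sum.inl j)
      = 1 - r.coroot b (d.e (Sum.inl j)) * d.e.repr (r.root b) (Sum.inl j) := by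
  classical
  rw [r.simple_act]
  simp [map_sub, map_smul, Module.Basis.repr_self, Finsupp.single_apply,
    Finsupp.smul_apply, smul_eq_mul, Finsupp.sub_apply]

private lemma aux_X_mem (j : ι) : d.e (Sum.inl j) ∈ almostOrthant k d.e := by
  classical
  constructor
  · intro p
    simp only [Module.Basis.repr_self, Finsupp.single_apply]
    rcases eq_or_ne (Sum.inl j) p with h | h
    · rw [if_pos h]; simpa using k.one_mem
    · rw [if_neg h]; simpa using k.zero_mem
  · intro i
    simp only [Module.Basis.repr_self, Finsupp.single_apply]
    rcases eq_or_ne (Sum.inl j : ι ⊕ η) (Sum.inl i) with h | h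
    · rw [if_pos h]; norm_num
    · rw [if_neg h]; norm_num

/-- Key vanishing lemma: if the simple reflection `b'` does not move `xᵢ`, then the
coefficient of `xᵢ` in `root b'` is zero. -/
private lemma aux_vanish (b' : B) (i : ι) (hi : r.coroot b' (d.e (Sum.inl i)) = 0) :
    d.e.repr (r.root b') (Sum.inl i) = 0 := by
  set R : ι ⊕ η → ℝ := fun p => ((d.e.repr (r.root b') p : 𝕜) : ℝ) with hR
  set C : ι ⊕ η → ℝ := fun p => ((r.coroot b' (d.e p) : 𝕜) : ℝ) with hC
  -- inequality (A)
  have hA : ∀ j p : ι, j ≠ p → C (Sum.inl j) * R (Sum.inl p) ≤ 0 := by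
    intro j p hjp
    have hmem := d.orthant_stable (cs.simple b') (d.e (Sum.inl j)) (aux_X_mem d j)
    have hpos := hmem.2 p
    rw [aux_coord_ne d b' j (Sum.inl p) (by simpa using hjp)] at hpos
    push_cast at hpos
    simp only [hR, hC]
    linarith
  -- inequality (B)
  have hB : ∀ j : ι, R (Sum.inl j) * C (Sum.inl j) ≤ 1 := by
    intro j
    have hmem := d.orthant_stable (cs.simple b') (d.e (Sum.inl j)) (aux_X_mem d j)
    have hpos := hmem.2 j
    rw [aux_coord_eq d b' j] at hpos
    push_cast at hpos
    simp only [hR, hC]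
    nlinarith
  have hCr : ∀ j : η, C (Sum.inr j) = 0 := by
    intro j
    simp [hC, aux_coroot_hbar d b' j]
  -- the sum identity (C)
  have hexp : r.coroot b' (r.root b')
      = ∑ p ∈ (d.e.repr (r.root b')).support, d.e.repr (r.root b') p * r.coroot b' (d.e p) := by
    conv_lhs => rw [← d.e.linearCombination_repr (r.root b'), Finsupp.linearCombination_apply]
    rw [Finsupp.sum, map_sum]
    simp [smul_eq_mul]
  have hsum : ∑ p ∈ (d.e.repr (r.root b')).support, R p * C p = 2 := by
    have h2 : ((∑ p ∈ (d.e.repr (r.root b')).support,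
        d.e.repr (r.root b') p * r.coroot b' (d.e p) : 𝕜) : ℝ) = 2 := by
      rw [← hexp, r.coroot_root_self]; norm_cast
    rw [← h2]
    push_cast
    rfl
  -- conclude
  by_contra hne
  have hRine : R (Sum.inl i) ≠ 0 := by
    simp only [hR]
    exact fun hh => hne (by exact_mod_cast hh)
  have hCi : C (Sum.inl i) = 0 := by simp [hC, hi]
  have hcases : ∀ p : ι ⊕ η, (∃ a, p = Sum.inl a) ∨ (∃ b, p = Sum.inr b) := by
    intro p
    cases p with
    | inl a => exact Or.inl ⟨a, rfl⟩
    | inr b => exact Or.inr ⟨b, rfl⟩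
  rcases lt_or_gt_of_ne hRine with hneg | hpos
  · -- R i < 0 : use ε = -1
    refine aux_core Sum.inl Sum.inr hcases R C _ hA hB hCr hsum (-1) (Or.inr rfl) ?_
    intro q
    rcases eq_or_ne q i with rfl | hqi
    · rw [hCi]; norm_num
    · have := hA q i hqi
      nlinarith
  · -- R i > 0 : use ε = 1
    refine aux_core Sum.inl Sum.inr hcases R C _ hA hB hCr hsum 1 (Or.inl rfl) ?_
    intro q
    rcases eq_or_ne q i with rfl | hqi
    · rw [hCi]; norm_num
    · have := hA q i hqi
      nlinarith

/-- If the moved sets of `b` and `b'` are disjoint, the pairing of the coroot of `b`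
with the root of `b'` vanishes. -/
private lemma aux_pairing_zero (b b' : B) (h : d.moved b ∩ d.moved b' = ∅) :
    r.coroot b (r.root b') = 0 := by
  have hexp : r.coroot b (r.root b')
      = ∑ p ∈ (d.e.repr (r.root b')).support, d.e.repr (r.root b') p * r.coroot b (d.e p) := by
    conv_lhs => rw [← d.e.linearCombination_repr (r.root b'), Finsupp.linearCombination_apply]
    rw [Finsupp.sum, map_sum]
    simp [smul_eq_mul]
  rw [hexp]
  apply Finset.sum_eq_zero
  intro p _
  cases p with
  | inr j => rw [aux_coroot_hbar d b j, mul_zero]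
  | inl i =>
    by_cases hib : i ∈ d.moved b
    · have hib' : i ∉ d.moved b' := fun hmem =>
        Set.eq_empty_iff_forall_notMem.mp h i ⟨hib, hmem⟩
      rw [aux_vanish d b' i (aux_not_moved d b' i hib'), zero_mul]
    · rw [aux_not_moved d b i hib, mul_zero]

end OrthantSetup

end AuxCommute

/-- If `W` preserves the almost-orthant for `k` spanned by `(X, H)` and two simple
reflections `s, t` satisfy `Xₛ ∩ Xₜ = ∅`, then the actions of `s` and `t` on `V`
commute: `s ∘ t = t ∘ s` as linear maps on `V`. -/
theorem disjoint_supports_commute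
    {𝕜 k : Subring ℝ} {B W : Type*} [Group W] {M : CoxeterMatrix B}
    {cs : CoxeterSystem M W} {V : Type*} [AddCommGroup V] [Module 𝕜 V] [Module.Free 𝕜 V]
    {r : Realization 𝕜 M cs V} {ι η : Type*}
    (d : OrthantSetup 𝕜 k r ι η) (b b' : B)
    (h : d.moved b ∩ d.moved b' = ∅) :
    ∀ v : V, r.ρ (cs.simple b) (r.ρ (cs.simple b') v) =
      r.ρ (cs.simple b') (r.ρ (cs.simple b) v) := by
  intro v
  have h1 : r.coroot b (r.root b') = 0 := OrthantSetup.aux_pairing_zero d b b' h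
  have h2 : r.coroot b' (r.root b) = 0 := OrthantSetup.aux_pairing_zero d b' b
    (by rw [Set.inter_comm]; exact h)
  have e1 : r.ρ (cs.simple b) (r.ρ (cs.simple b') v)
      = v - r.coroot b' v • r.root b' - r.coroot b v • r.root b := by
    rw [r.simple_act, r.simple_act]
    simp [map_sub, map_smul, smul_eq_mul, h1, sub_smul, mul_smul]
  have e2 : r.ρ (cs.simple b') (r.ρ (cs.simple b) v)
      = v - r.coroot b v • r.root b - r.coroot b' v • r.root b' := by
    rw [r.simple_act, r.simple_act]
    simp [map_sub, map_smul, smul_eq_mul, h2, sub_smul, mul_smul]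
  rw [e1, e2, sub_right_comm]
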